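/- arXiv:1206.5167 — 2 statements merged into one kernel-verified Lean document; each statement's English description precedes it below -/
import Mathlib

section
/- Let V ⊆ ℝ^n be a regular space with capacity c. In the Ford–Fulkerson method that always augments maximally along a shortest augmenting r-path (by 1-norm), starting from the zero flow, the total number of augmentations before no augmenting path exists is at most n². -/
open Finset

variable {n : ℕ}

/-- The support of a vector. -/
def supp (x : Fin n → ℝ) : Set (Fin n) := {j | x j ≠ 0}

/-- A nonzero vector of `V` is elementary if no nonzero vector of `V` has support
properly contained in its support. -/
def IsElementary (V : Submodule ℝ (Fin n → ℝ)) (x : Fin n → ℝ) : Prop :=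
  x ∈ V ∧ x ≠ 0 ∧ ∀ y ∈ V, y ≠ 0 → ¬ (supp y ⊂ supp x)

/-- A primitive vector: elementary with entries in `{-1, 0, 1}`. -/
def IsPrimitive (V : Submodule ℝ (Fin n → ℝ)) (x : Fin n → ℝ) : Prop :=
  IsElementary V x ∧ ∀ j, x j ∈ ({-1, 0, 1} : Set ℝ)

/-- `y` conforms to `x`. -/
def Conforms (y x : Fin n → ℝ) : Prop := ∀ j, y j ≠ 0 → y j * x j > 0

/-- A regular space: the kernel of a totally unimodular matrix. -/
def IsRegularSpace (V : Submodule ℝ (Fin n → ℝ)) : Prop :=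
  ∃ (m : ℕ) (A : Matrix (Fin m) (Fin n) ℝ),
    A.IsTotallyUnimodular ∧ V = LinearMap.ker A.mulVecLin

/-- An `r`-path: a primitive vector with value `+1` at `r`. -/
def IsRPath (V : Submodule ℝ (Fin n → ℝ)) (r : Fin n) (P : Fin n → ℝ) : Prop :=
  IsPrimitive V P ∧ P r = 1

/-- Feasibility with respect to capacity `c` (no constraint at `r`). -/
def Feasible (c : Fin n → ℝ) (r : Fin n) (f : Fin n → ℝ) : Prop :=
  ∀ j, j ≠ r → 0 ≤ f j ∧ f j ≤ c j

/-- An `r`-path `P` is augmenting for the flow `f`. -/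
def Augmenting (V : Submodule ℝ (Fin n → ℝ)) (c : Fin n → ℝ) (r : Fin n)
    (f P : Fin n → ℝ) : Prop :=
  IsRPath V r P ∧ ∃ ε : ℝ, 0 < ε ∧ Feasible c r (f + ε • P)

/-- The 1-norm. -/
def onorm (x : Fin n → ℝ) : ℝ := ∑ j, |x j|

/-- A shortest augmenting `r`-path. -/
def ShortestAug (V : Submodule ℝ (Fin n → ℝ)) (c : Fin n → ℝ) (r : Fin n)
    (f P : Fin n → ℝ) : Prop :=
  Augmenting V c r f P ∧ ∀ Q, Augmenting V c r f Q → onorm P ≤ onorm Q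

/-- `g` is obtained from `f` by maximal augmentation along `P`. -/
def MaxAug (c : Fin n → ℝ) (r : Fin n) (f P g : Fin n → ℝ) : Prop :=
  ∃ ε : ℝ, 0 < ε ∧ g = f + ε • P ∧ Feasible c r g ∧
    ∀ ε' : ℝ, ε < ε' → ¬ Feasible c r (f + ε' • P)

/-- A conformal primitive decomposition of `P + Q` in which `M` and `J` are the two
`r`-path summands (`M` playing the role of `P ∧ Q` and `J` of `P ∨ Q`). -/
def MeetJoinDecomp (V : Submodule ℝ (Fin n → ℝ)) (r : Fin n)
    (P Q M J : Fin n → ℝ) : Prop :=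
  ∃ (k : ℕ) (p : Fin k → Fin n → ℝ) (a b : Fin k),
    (∀ i, IsPrimitive V (p i)) ∧ (∀ i, Conforms (p i) (P + Q)) ∧
    (∑ i, p i) = P + Q ∧ a ≠ b ∧ p a = M ∧ p b = J ∧
    p a r = 1 ∧ p b r = 1 ∧ ∀ i, p i r = 1 → i = a ∨ i = b


/-- From a linearly independent family of vectors one can select coordinates
forming an invertible square matrix. -/
lemma exists_good_cols {ι : Type*} [Fintype ι] [DecidableEq ι] :
    ∀ {t : ℕ} (v : Fin t → ι → ℝ), LinearIndependent ℝ v →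
    ∃ g : Fin t → ι, Function.Injective g ∧ (Matrix.of fun k l => v k (g l)).det ≠ 0 := by
  intro t
  induction t with
  | zero =>
    intro v _
    exact ⟨Fin.elim0, fun a => a.elim0, by simp [Matrix.det_fin_zero]⟩
  | succ t ih =>
    intro v hv
    have hv' : LinearIndependent ℝ (fun k : Fin t => v k.castSucc) :=
      hv.comp Fin.castSucc (Fin.castSucc_injective t)
    obtain ⟨g, hg, hdet⟩ := ih _ hv'
    -- candidate matrices
    set N : ι → Matrix (Fin (t+1)) (Fin (t+1)) ℝ :=
      fun j => Matrix.of fun k l => v k ((Fin.snoc g j : Fin (t+1) → ι) l) with hN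
    -- minors are independent of j
    set minor : Fin (t+1) → Matrix (Fin t) (Fin t) ℝ :=
      fun k => Matrix.of fun a b => v (k.succAbove a) (g b) with hminor
    have hexp : ∀ j, (N j).det =
        ∑ k : Fin (t+1), (-1) ^ ((k : ℕ) + (t : ℕ)) * v k j * (minor k).det := by
      intro j
      rw [Matrix.det_succ_column (N j) (Fin.last t)]
      refine Finset.sum_congr rfl fun k _ => ?_
      have h1 : N j k (Fin.last t) = v k j := by simp [hN]
      have h2 : (N j).submatrix k.succAbove (Fin.last t).succAbove = minor k := by
        ext a b
        simp [hN, hminor, Fin.succAbove_last]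
      rw [h1, h2]
      norm_num [Fin.val_last]
    have hlastminor : minor (Fin.last t) = Matrix.of fun a b => v a.castSucc (g b) := by
      ext a b; simp [hminor, Fin.succAbove_last]
    -- there is a good j
    have hj : ∃ j : ι, (N j).det ≠ 0 := by
      by_contra h
      push_neg at h
      have hli := Fintype.linearIndependent_iff.mp hv
        (fun k => (-1) ^ ((k : ℕ) + (t : ℕ)) * (minor k).det)
      have hz : ∑ k : Fin (t+1), ((-1) ^ ((k : ℕ) + (t : ℕ)) * (minor k).det) • v k = 0 := by
        funext j
        have := hexp j
        rw [h j] at this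
        simp only [Finset.sum_apply, Pi.smul_apply, smul_eq_mul, Pi.zero_apply]
        rw [eq_comm] at this
        convert this using 1
        exact Finset.sum_congr rfl fun k _ => by ring
      have := hli hz (Fin.last t)
      rw [hlastminor] at this
      have hpow : ((-1 : ℝ)) ^ (((Fin.last t : Fin (t+1)) : ℕ) + (t : ℕ)) = 1 := by
        rw [Fin.val_last]
        exact Even.neg_one_pow ⟨t, rfl⟩
      rw [hpow, one_mul] at this
      exact hdet this
    obtain ⟨j, hj⟩ := hj
    have hjrange : ∀ l : Fin t, g l ≠ j := by
      intro l hl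
      apply hj
      apply Matrix.det_zero_of_column_eq (i := l.castSucc) (j := Fin.last t)
      · exact Fin.ne_of_lt l.castSucc_lt_last
      · intro k
        simp [hN, hl]
    refine ⟨(Fin.snoc g j : Fin (t+1) → ι), ?_, hj⟩
    intro a b hab
    rcases Fin.eq_castSucc_or_eq_last a with ⟨a', rfl⟩ | rfl <;>
      rcases Fin.eq_castSucc_or_eq_last b with ⟨b', rfl⟩ | rfl
    · simp only [Fin.snoc_castSucc] at hab
      exact congrArg Fin.castSucc (hg hab)
    · simp only [Fin.snoc_castSucc, Fin.snoc_last] at hab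
      exact absurd hab (hjrange a')
    · simp only [Fin.snoc_castSucc, Fin.snoc_last] at hab
      exact absurd hab.symm (hjrange b')
    · rfl

lemma signtype_abs {x : ℝ} (hx : x ∈ Set.range (SignType.cast : SignType → ℝ))
    (h0 : x ≠ 0) : |x| = 1 := by
  obtain ⟨s, rfl⟩ := hx
  cases s <;> simp_all

lemma elementary_abs_eq {m : ℕ} {A : Matrix (Fin m) (Fin n) ℝ} (hA : A.IsTotallyUnimodular)
    {y : Fin n → ℝ} (hy : IsElementary (LinearMap.ker A.mulVecLin) y)
    {j0 j1 : Fin n} (h0 : y j0 ≠ 0) (h1 : y j1 ≠ 0) : |y j1| = |y j0| := by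
  classical
  by_cases hj : j1 = j0
  · rw [hj]
  set ι := {j : Fin n // y j ≠ 0 ∧ j ≠ j0} with hι
  set t := Fintype.card ι with ht
  set e : Fin t ≃ ι := (Fintype.equivFin ι).symm with he
  set ec : Fin t → Fin n := fun k => (e k : Fin n) with hec
  have hec_inj : Function.Injective ec := fun a b hab => e.injective (Subtype.ext hab)
  have hec_ne : ∀ k, ec k ≠ j0 := fun k => (e k).2.2
  have hec_nz : ∀ k, y (ec k) ≠ 0 := fun k => (e k).2.1
  have hyker : A.mulVecLin y = 0 := LinearMap.mem_ker.mp hy.1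
  -- linear independence of the columns indexed by `ec`
  have hli : LinearIndependent ℝ (fun k : Fin t => fun i => A i (ec k)) := by
    rw [Fintype.linearIndependent_iff]
    intro cc hcc
    set z : Fin n → ℝ := ∑ k, cc k • (Pi.single (ec k) (1:ℝ) : Fin n → ℝ) with hz
    have hzval : ∀ k, z (ec k) = cc k := by
      intro k
      rw [hz, Finset.sum_apply, Finset.sum_eq_single k]
      · simp
      · intro b _ hbk
        have hne : ec k ≠ ec b := fun h => hbk (hec_inj h.symm)
        simp [Pi.single_apply, hne]
      · simp
    have hzother : ∀ j, y j = 0 ∨ j = j0 → z j = 0 := by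
      intro j hj'
      rw [hz, Finset.sum_apply]
      apply Finset.sum_eq_zero
      intro k _
      have : j ≠ ec k := by
        rcases hj' with h | h
        · intro hh; exact hec_nz k (hh ▸ h)
        · intro hh; exact hec_ne k (hh ▸ h)
      simp [Pi.single_apply, this]
    have hzker : z ∈ LinearMap.ker A.mulVecLin := by
      rw [LinearMap.mem_ker, hz, map_sum]
      have : ∀ k : Fin t, A.mulVecLin (cc k • (Pi.single (ec k) (1:ℝ) : Fin n → ℝ))
          = cc k • fun i => A i (ec k) := by
        intro k
        rw [map_smul]
        congr 1
        show A.mulVec (Pi.single (ec k) 1) = fun i => A i (ec k)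
        rw [Matrix.mulVec_single]
        simp
        rfl
      rw [Finset.sum_congr rfl fun k _ => this k]
      exact hcc
    intro k
    by_contra hk
    have hzne : z ≠ 0 := by
      intro h
      apply hk
      rw [← hzval k, h, Pi.zero_apply]
    have hsubset : supp z ⊆ supp y := by
      intro j hj'
      by_contra hyj
      simp only [supp, Set.mem_setOf_eq, not_not] at hj' hyj
      exact hj' (hzother j (Or.inl hyj))
    have hssub : supp z ⊂ supp y := by
      refine hsubset.ssubset_of_ne ?_
      intro hEq
      have hj0y : j0 ∈ supp y := h0
      rw [← hEq] at hj0y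
      exact hj0y (hzother j0 (Or.inr rfl))
    exact absurd hssub (hy.2.2 z hzker hzne)
  obtain ⟨g, hg, hdet⟩ := exists_good_cols (fun k i => A i (ec k)) hli
  set B : Matrix (Fin t) (Fin t) ℝ := A.submatrix g ec with hB
  have hBdet : B.det ≠ 0 := by
    have hBt : (Matrix.of fun k l => (fun (k : Fin t) (i : Fin m) => A i (ec k)) k (g l)) = B.transpose := by
      ext a b; rfl
    rw [hBt, Matrix.det_transpose] at hdet
    exact hdet
  have hBTU : B.det ∈ Set.range (SignType.cast : SignType → ℝ) := hA t g ec hg hec_inj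
  -- decomposition of y into single coordinates
  have hydecomp : y = y j0 • (Pi.single j0 (1:ℝ) : Fin n → ℝ) + ∑ k, y (ec k) • (Pi.single (ec k) (1:ℝ) : Fin n → ℝ) := by
    funext j
    simp only [Pi.add_apply, Pi.smul_apply, Finset.sum_apply, smul_eq_mul, Pi.single_apply,
      mul_ite, mul_one, mul_zero]
    by_cases hjj0 : j = j0
    · subst hjj0
      rw [Finset.sum_eq_zero]
      · simp
      · intro k _
        simp [Ne.symm (hec_ne k), (fun h => hec_ne k h.symm : j ≠ ec k)]
    · by_cases hyj : y j = 0
      · rw [Finset.sum_eq_zero]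
        · simp [hyj, hjj0]
        · intro k _
          have : j ≠ ec k := fun h => hec_nz k (h ▸ hyj)
          simp [this]
      · set k1 : Fin t := e.symm ⟨j, hyj, hjj0⟩ with hk1
        have hk1j : ec k1 = j := by
          rw [hec, hk1]
          simp
        rw [Finset.sum_eq_single k1]
        · simp [hk1j, hjj0]
        · intro b _ hbk
          have : j ≠ ec b := by
            intro h
            exact hbk (hec_inj (by rw [hk1j, ← h]))
          simp [this]
        · simp
  -- the linear system
  set yT : Fin t → ℝ := fun k => y (ec k) with hyT
  set b0 : Fin t → ℝ := fun l => A (g l) j0 with hb0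
  have hBy : B.mulVec yT = (-(y j0)) • b0 := by
    funext l
    have h3 : A.mulVecLin y = y j0 • A.mulVecLin (Pi.single j0 (1:ℝ) : Fin n → ℝ)
        + ∑ k, y (ec k) • A.mulVecLin ((Pi.single (ec k) (1:ℝ) : Fin n → ℝ)) := by
      conv_lhs => rw [hydecomp]
      rw [map_add, map_smul, map_sum]
      simp_rw [map_smul]
    have h4 := h3.symm.trans hyker
    have h5 := congrFun h4 (g l)
    simp only [Pi.add_apply, Pi.smul_apply, Finset.sum_apply, smul_eq_mul,
      Matrix.mulVecLin_apply, Matrix.mulVec_single, mul_one, Pi.zero_apply,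
        MulOpposite.op_one, one_smul, Matrix.col_apply] at h5
    have h6 : B.mulVec yT l = ∑ k, y (ec k) * A (g l) (ec k) := by
      simp only [Matrix.mulVec, dotProduct, hB, Matrix.submatrix_apply, hyT]
      exact Finset.sum_congr rfl fun k _ => mul_comm _ _
    rw [h6]
    simp only [Pi.smul_apply, smul_eq_mul, hb0]
    linarith
  have hcram : B.det • yT = B.cramer ((-(y j0)) • b0) := by
    rw [Matrix.cramer_eq_adjugate_mulVec, ← hBy, Matrix.mulVec_mulVec, Matrix.adjugate_mul,
      Matrix.smul_mulVec, Matrix.one_mulVec]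
  set k1 : Fin t := e.symm ⟨j1, h1, hj⟩ with hk1
  have hk1j : ec k1 = j1 := by rw [hec, hk1]; simp
  have hmain : B.det * y j1 = -(y j0) * (B.updateCol k1 b0).det := by
    have := congrFun hcram k1
    simp only [Pi.smul_apply, smul_eq_mul, hyT, hk1j] at this
    rw [this, Matrix.cramer_apply]
    have : B.updateCol k1 ((-(y j0)) • b0) = B.updateCol k1 (((-(y j0)) : ℝ) • b0) := rfl
    rw [this, Matrix.det_updateCol_smul]
  -- the updated matrix is a submatrix of A
  set ec' : Fin t → Fin n := fun k => if k = k1 then j0 else ec k with hec'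
  have hupd : B.updateCol k1 b0 = A.submatrix g ec' := by
    ext l k
    rw [Matrix.updateCol_apply]
    by_cases hk : k = k1 <;> simp [hk, hec', hb0, hB]
  have hec'_inj : Function.Injective ec' := by
    intro a b hab
    simp only [hec'] at hab
    by_cases ha : a = k1 <;> by_cases hb' : b = k1 <;>
      simp only [ha, hb', if_pos, if_neg, if_true, if_false] at hab ⊢
    · exact absurd hab.symm (hec_ne b)
    · exact absurd hab (hec_ne a)
    · exact hec_inj hab
  have hd1 : (B.updateCol k1 b0).det ∈ Set.range (SignType.cast : SignType → ℝ) := by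
    rw [hupd]
    exact hA t g ec' hg hec'_inj
  have habsB : |B.det| = 1 := signtype_abs hBTU hBdet
  have hd1ne : (B.updateCol k1 b0).det ≠ 0 := by
    intro hzero
    rw [hzero, mul_zero] at hmain
    rcases mul_eq_zero.mp hmain with h | h
    · exact hBdet h
    · exact h1 h
  have habsd : |(B.updateCol k1 b0).det| = 1 := signtype_abs hd1 hd1ne
  have := congrArg abs hmain
  rw [abs_mul, abs_mul, habsB, abs_neg, habsd, one_mul, mul_one] at this
  exact this

/-- In any subspace, below any nonzero vector there is a conformal elementary vector. -/
lemma exists_elementary_conformal (V : Submodule ℝ (Fin n → ℝ)) :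
    ∀ (K : ℕ) (x : Fin n → ℝ), x ∈ V → x ≠ 0 →
      (Finset.univ.filter (fun j => x j ≠ 0)).card ≤ K →
      ∃ y, IsElementary V y ∧ Conforms y x := by
  intro K
  induction K with
  | zero =>
    intro x hxV hx0 hcard
    exfalso
    obtain ⟨j, hj⟩ := Function.ne_iff.mp hx0
    have : j ∈ Finset.univ.filter (fun j => x j ≠ 0) := by
      simpa using hj
    have := Finset.card_pos.mpr ⟨j, this⟩
    omega
  | succ K ih =>
    intro x hxV hx0 hcard
    by_cases hel : IsElementary V x
    · refine ⟨x, hel, fun j hj => mul_self_pos.mpr hj⟩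
    · -- there is a vector with strictly smaller support
      have hz : ∃ z ∈ V, z ≠ 0 ∧ supp z ⊂ supp x := by
        by_contra h
        push_neg at h
        exact hel ⟨hxV, hx0, fun y hyV hy0 => h y hyV hy0⟩
      obtain ⟨z, hzV, hz0, hzsub⟩ := hz
      have hzsupp : ∀ j, z j ≠ 0 → x j ≠ 0 := fun j hj => hzsub.1 hj
      obtain ⟨j1, hj1⟩ := Function.ne_iff.mp hz0
      simp only [Pi.zero_apply] at hj1
      have hxj1 : x j1 ≠ 0 := hzsupp j1 hj1
      have hprod : z j1 * x j1 ≠ 0 := mul_ne_zero hj1 hxj1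
      obtain ⟨w, hwV, hw0, hwsupp, hweq, j2, hj2⟩ :
          ∃ w, w ∈ V ∧ w ≠ 0 ∧ (∀ j, w j ≠ 0 → x j ≠ 0) ∧ supp w = supp z ∧
            ∃ j2, w j2 * x j2 > 0 := by
        rcases lt_or_gt_of_ne hprod with h | h
        · refine ⟨-z, neg_mem hzV, neg_ne_zero.mpr hz0, fun j hj => hzsupp j (by simpa using hj),
            ?_, j1, by simp only [Pi.neg_apply]; nlinarith⟩
          ext j; simp [supp]
        · exact ⟨z, hzV, hz0, hzsupp, rfl, j1, h⟩
      set T : Finset (Fin n) := Finset.univ.filter (fun j => w j * x j > 0) with hT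
      have hTne : T.Nonempty := ⟨j2, by simp [hT, hj2]⟩
      set ρ : Fin n → ℝ := fun j => x j / w j with hρ
      set tstar : ℝ := (T.image ρ).min' (hTne.image ρ) with htstar
      obtain ⟨jstar, hjstarT, hjstarval⟩ : ∃ j ∈ T, ρ j = tstar := by
        have hmm := (T.image ρ).min'_mem (hTne.image ρ)
        rw [Finset.mem_image] at hmm
        obtain ⟨j, hjT, hjval⟩ := hmm
        exact ⟨j, hjT, hjval⟩
      have hjstar : w jstar * x jstar > 0 := by
        simp only [hT, Finset.mem_filter] at hjstarT
        exact hjstarT.2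
      have hwjstar : w jstar ≠ 0 := fun h => by simp [h] at hjstar
      have htpos : 0 < tstar := by
        rw [← hjstarval]
        show 0 < x jstar / w jstar
        have h2 : x jstar / w jstar = (w jstar * x jstar) / (w jstar * w jstar) := by
          field_simp
        rw [h2]
        exact div_pos hjstar (mul_self_pos.mpr hwjstar)
      have htle : ∀ j, w j * x j > 0 → tstar ≤ x j / w j := by
        intro j hj
        apply Finset.min'_le
        exact Finset.mem_image_of_mem ρ (by simp [hT, hj])
      set x' : Fin n → ℝ := x - tstar • w with hx'
      have hx'V : x' ∈ V := sub_mem hxV (Submodule.smul_mem V tstar hwV)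
      have hx'supp : ∀ j, x j = 0 → x' j = 0 := by
        intro j hj
        have hwj : w j = 0 := by
          by_contra hwj
          exact hwsupp j hwj hj
        simp [hx', hj, hwj]
      have hx'jstar : x' jstar = 0 := by
        simp only [hx', Pi.sub_apply, Pi.smul_apply, smul_eq_mul]
        rw [← hjstarval]
        show x jstar - x jstar / w jstar * w jstar = 0
        field_simp
        ring
      have hconf' : ∀ j, x' j ≠ 0 → x' j * x j > 0 := by
        intro j hj
        by_cases hwj : w j = 0
        · have hxx : x' j = x j := by simp [hx', hwj]
          rw [hxx] at hj ⊢
          exact mul_self_pos.mpr hj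
        · have hxj : x j ≠ 0 := hwsupp j hwj
          have h3 : x' j * x j = x j * x j - tstar * (w j * x j) := by
            simp only [hx', Pi.sub_apply, Pi.smul_apply, smul_eq_mul]
            ring
          rcases lt_trichotomy (w j * x j) 0 with h | h | h
          · rw [h3]
            nlinarith [mul_self_pos.mpr hxj, mul_pos htpos (neg_pos.mpr h)]
          · exact absurd h (mul_ne_zero hwj hxj)
          · have hle := htle j h
            have hid : x j / w j * (w j * x j) = x j * x j := by
              field_simp
            have h2 := mul_le_mul_of_nonneg_right hle h.le
            rw [hid] at h2
            have h4 : 0 ≤ x' j * x j := by rw [h3]; linarith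
            exact lt_of_le_of_ne h4 (Ne.symm (mul_ne_zero hj hxj))
      have hx'0 : x' ≠ 0 := by
        intro hzero
        obtain ⟨j3, hj3x, hj3w⟩ := Set.exists_of_ssubset (hweq ▸ hzsub : supp w ⊂ supp x)
        simp only [supp, Set.mem_setOf_eq, not_not] at hj3x hj3w
        have := congrFun hzero j3
        simp only [hx', Pi.sub_apply, Pi.smul_apply, smul_eq_mul, Pi.zero_apply, hj3w,
          mul_zero, sub_zero] at this
        exact hj3x this
      have hcard' : (Finset.univ.filter (fun j => x' j ≠ 0)).card ≤ K := by
        have hsub : (Finset.univ.filter (fun j => x' j ≠ 0)) ⊆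
            (Finset.univ.filter (fun j => x j ≠ 0)).erase jstar := by
          intro j hj
          simp only [Finset.mem_filter, Finset.mem_univ, true_and] at hj
          rw [Finset.mem_erase]
          constructor
          · intro hEq; rw [hEq] at hj; exact hj hx'jstar
          · simp only [Finset.mem_filter, Finset.mem_univ, true_and]
            intro hxj
            exact hj (hx'supp j hxj)
        have hmem : jstar ∈ Finset.univ.filter (fun j => x j ≠ 0) := by
          simp only [Finset.mem_filter, Finset.mem_univ, true_and]
          intro h; rw [h] at hjstar; simp at hjstar
        have := Finset.card_le_card hsub
        rw [Finset.card_erase_of_mem hmem] at this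
        omega
      obtain ⟨y, hyel, hyconf⟩ := ih x' hx'V hx'0 hcard'
      refine ⟨y, hyel, fun j hj => ?_⟩
      have h1 := hyconf j hj
      have hx'ne : x' j ≠ 0 := by intro h; rw [h, mul_zero] at h1; exact lt_irrefl 0 h1
      have h2 := hconf' j hx'ne
      nlinarith [mul_pos h1 h2, mul_self_pos.mpr hx'ne]

lemma supp_smul_ne {c : ℝ} (hc : c ≠ 0) (y : Fin n → ℝ) : supp (c • y) = supp y := by
  ext j
  simp [supp, hc]

/-- In a regular space, below any nonzero vector there is a conformal primitive vector. -/
lemma exists_primitive_conformal {V : Submodule ℝ (Fin n → ℝ)} (hV : IsRegularSpace V)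
    {x : Fin n → ℝ} (hxV : x ∈ V) (hx0 : x ≠ 0) :
    ∃ p, IsPrimitive V p ∧ Conforms p x := by
  obtain ⟨m, A, hTU, rfl⟩ := hV
  obtain ⟨y, hyel, hyconf⟩ := exists_elementary_conformal _ _ x hxV hx0 le_rfl
  obtain ⟨j0, hj0⟩ := Function.ne_iff.mp hyel.2.1
  simp only [Pi.zero_apply] at hj0
  set μ : ℝ := |y j0| with hμ
  have hμpos : 0 < μ := abs_pos.mpr hj0
  set p : Fin n → ℝ := μ⁻¹ • y with hp
  have hpval : ∀ j, p j = μ⁻¹ * y j := fun j => rfl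
  have hpne : ∀ j, y j ≠ 0 → p j ≠ 0 := by
    intro j hj
    rw [hpval]
    exact mul_ne_zero (inv_ne_zero hμpos.ne') hj
  refine ⟨p, ⟨⟨Submodule.smul_mem _ _ hyel.1, ?_, ?_⟩, ?_⟩, ?_⟩
  · intro h
    exact hpne j0 hj0 (by rw [h]; rfl)
  · intro y' hy'V hy'0
    rw [hp, supp_smul_ne (inv_ne_zero hμpos.ne')]
    exact hyel.2.2 y' hy'V hy'0
  · intro j
    by_cases hyj : y j = 0
    · simp only [Set.mem_insert_iff, Set.mem_singleton_iff]
      right; left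
      rw [hpval, hyj, mul_zero]
    · have habs : |y j| = μ := elementary_abs_eq hTU hyel hj0 hyj
      have : |p j| = 1 := by
        rw [hpval, abs_mul, abs_inv, abs_abs, habs]
        field_simp
        exact hμ
      simp only [Set.mem_insert_iff, Set.mem_singleton_iff]
      rcases (abs_eq (le_of_lt one_pos)).mp this with h | h
      · right; right; exact h
      · left; exact h
  · intro j hj
    have hyj : y j ≠ 0 := by
      intro h
      exact hj (by rw [hpval, h, mul_zero])
    have := hyconf j hyj
    rw [hpval, mul_assoc]
    exact mul_pos (inv_pos.mpr hμpos) this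

lemma mem01 {x : ℝ} (h : x ∈ ({-1, 0, 1} : Set ℝ)) : x = -1 ∨ x = 0 ∨ x = 1 := by
  simpa [Set.mem_insert_iff] using h

/-- integer-valued vectors in a regular space admit conformal primitive decompositions -/
lemma exists_conformal_decomp {V : Submodule ℝ (Fin n → ℝ)} (hV : IsRegularSpace V) :
    ∀ (K : ℕ) (z : Fin n → ℤ) (x : Fin n → ℝ), (∀ j, x j = (z j : ℝ)) → x ∈ V →
      (∑ j, (z j).natAbs) ≤ K →
      ∃ (k : ℕ) (p : Fin k → Fin n → ℝ),
        (∀ i, IsPrimitive V (p i)) ∧ (∀ i, Conforms (p i) x) ∧ ∑ i, p i = x := by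
  intro K
  induction K with
  | zero =>
    intro z x hxz hxV hK
    have hx0 : x = 0 := by
      funext j
      have : (z j).natAbs = 0 := by
        have := Finset.sum_eq_zero_iff.mp (Nat.le_zero.mp hK)
        exact this j (Finset.mem_univ j)
      rw [hxz j, Int.natAbs_eq_zero.mp this]
      simp
    exact ⟨0, Fin.elim0, fun i => i.elim0, fun i => i.elim0, by simp [hx0]⟩
  | succ K ih =>
    intro z x hxz hxV hK
    by_cases hx0 : x = 0
    · exact ⟨0, Fin.elim0, fun i => i.elim0, fun i => i.elim0, by simp [hx0]⟩
    obtain ⟨p, hp, hpconf⟩ := exists_primitive_conformal hV hxV hx0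
    -- integer form of p
    set pz : Fin n → ℤ := fun j => if p j = 1 then 1 else if p j = -1 then -1 else 0 with hpz
    have hpzval : ∀ j, (pz j : ℝ) = p j := by
      intro j
      rcases mem01 (hp.2 j) with h | h | h <;> norm_num [hpz, h]
    -- per-coordinate control
    have hcoord : ∀ j, (z j - pz j).natAbs ≤ (z j).natAbs ∧
        (p j ≠ 0 → (z j - pz j).natAbs < (z j).natAbs) := by
      intro j
      rcases mem01 (hp.2 j) with h | h | h
      · have hconf := hpconf j (by rw [h]; norm_num)
        rw [h] at hconf
        have hxneg : x j < 0 := by nlinarith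
        have hzneg : z j ≤ -1 := by
          have h9 : (z j : ℝ) < 0 := by rw [← hxz j]; exact hxneg
          have : z j < 0 := by exact_mod_cast h9
          omega
        have hpzj : pz j = -1 := by norm_num [hpz, h]
        rw [hpzj]
        constructor
        · omega
        · intro _; omega
      · have hpzj : pz j = 0 := by norm_num [hpz, h]
        rw [hpzj]
        exact ⟨by omega, fun hc => absurd h hc⟩
      · have hconf := hpconf j (by rw [h]; norm_num)
        rw [h, one_mul] at hconf
        have hzpos : 1 ≤ z j := by
          have h9 : (0:ℝ) < (z j : ℝ) := by rw [← hxz j]; exact hconf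
          have : 0 < z j := by exact_mod_cast h9
          omega
        have hpzj : pz j = 1 := by norm_num [hpz, h]
        rw [hpzj]
        constructor
        · omega
        · intro _; omega
    obtain ⟨j0, hj0⟩ := Function.ne_iff.mp hp.1.2.1
    simp only [Pi.zero_apply] at hj0
    set x' : Fin n → ℝ := x - p with hx'
    set z' : Fin n → ℤ := fun j => z j - pz j with hz'
    have hx'z : ∀ j, x' j = (z' j : ℝ) := by
      intro j
      simp only [hx', Pi.sub_apply, hz', Int.cast_sub, hpzval j, hxz j]
    have hx'V : x' ∈ V := sub_mem hxV hp.1.1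
    have hK' : (∑ j, (z' j).natAbs) ≤ K := by
      have hlt : (∑ j, (z' j).natAbs) < ∑ j, (z j).natAbs :=
        Finset.sum_lt_sum (fun j _ => (hcoord j).1) ⟨j0, Finset.mem_univ j0, (hcoord j0).2 hj0⟩
      omega
    obtain ⟨k, q, hq, hqconf, hqsum⟩ := ih z' x' hx'z hx'V hK'
    -- x' conforms weakly to x
    have hweak : ∀ j, x' j ≠ 0 → x' j * x j > 0 := by
      intro j hj
      rcases mem01 (hp.2 j) with h | h | h
      · have hconf := hpconf j (by rw [h]; norm_num)
        rw [h] at hconf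
        have hxneg : x j < 0 := by nlinarith
        have hzneg : z j ≤ -1 := by
          have h9 : (z j : ℝ) < 0 := by rw [← hxz j]; exact hxneg
          have : z j < 0 := by exact_mod_cast h9
          omega
        have hx'le : x' j ≤ 0 := by
          have : (z' j : ℝ) ≤ 0 := by
            have : z' j ≤ 0 := by simp only [hz']; norm_num [hpz, h]; omega
            exact_mod_cast this
          rw [hx'z j]; exact this
        have : x' j < 0 := lt_of_le_of_ne hx'le hj
        nlinarith
      · have : x' j = x j := by simp [hx', h]
        rw [this] at hj ⊢
        exact mul_self_pos.mpr hj
      · have hconf := hpconf j (by rw [h]; norm_num)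
        rw [h, one_mul] at hconf
        have hzpos : 1 ≤ z j := by
          have h9 : (0:ℝ) < (z j : ℝ) := by rw [← hxz j]; exact hconf
          have : 0 < z j := by exact_mod_cast h9
          omega
        have hx'ge : 0 ≤ x' j := by
          have : (0:ℤ) ≤ z' j := by simp only [hz']; norm_num [hpz, h]; omega
          rw [hx'z j]; exact_mod_cast this
        have : 0 < x' j := lt_of_le_of_ne hx'ge (Ne.symm hj)
        nlinarith
    set pp : Fin (k+1) → Fin n → ℝ := Fin.cons p q with hpp
    have e0 : pp 0 = p := Fin.cons_zero _ _
    have es : ∀ i', pp i'.succ = q i' := fun i' => Fin.cons_succ _ _ _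
    refine ⟨k + 1, pp, ?_, ?_, ?_⟩
    · intro i
      rcases i.eq_zero_or_eq_succ with h | ⟨i', h⟩ <;> subst h
      · rw [e0]; exact hp
      · rw [es i']; exact hq i'
    · intro i
      rcases i.eq_zero_or_eq_succ with h | ⟨i', h⟩ <;> subst h
      · rw [e0]; exact hpconf
      · rw [es i']
        intro j hj
        have h1 := hqconf i' j hj
        have hx'ne : x' j ≠ 0 := by
          intro h; rw [h, mul_zero] at h1; exact lt_irrefl 0 h1
        have h2 := hweak j hx'ne
        nlinarith [mul_pos h1 h2, mul_self_pos.mpr hx'ne]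
    · rw [hpp, Fin.sum_cons, hqsum]
      simp only [hx']
      abel

lemma onorm_nonneg (x : Fin n → ℝ) : 0 ≤ onorm x :=
  Finset.sum_nonneg fun j _ => abs_nonneg _

lemma onorm_pos {x : Fin n → ℝ} {j : Fin n} (hj : x j ≠ 0) : 0 < onorm x :=
  lt_of_lt_of_le (abs_pos.mpr hj)
    (Finset.single_le_sum (fun i _ => abs_nonneg (x i)) (Finset.mem_univ j))

lemma conformal_coord_abs {k : ℕ} (c : Fin k → ℝ) (s : ℝ)
    (h : ∀ i, c i ≠ 0 → c i * s > 0) (hs : ∑ i, c i = s) : ∑ i, |c i| = |s| := by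
  rcases lt_trichotomy s 0 with hlt | heq | hgt
  · have hne : ∀ i, c i ≤ 0 := by
      intro i
      by_contra hi
      push_neg at hi
      have := h i (ne_of_gt hi)
      nlinarith
    rw [abs_of_neg hlt, ← hs, ← Finset.sum_neg_distrib]
    exact Finset.sum_congr rfl fun i _ => abs_of_nonpos (hne i)
  · have : ∀ i, c i = 0 := by
      intro i
      by_contra hi
      have := h i hi
      rw [heq, mul_zero] at this
      exact lt_irrefl 0 this
    rw [heq]
    simp [this]
  · have hne : ∀ i, 0 ≤ c i := by
      intro i
      by_contra hi
      push_neg at hi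
      have := h i (ne_of_lt hi)
      nlinarith
    rw [abs_of_pos hgt, ← hs]
    exact Finset.sum_congr rfl fun i _ => abs_of_nonneg (hne i)

lemma conformal_sum_onorm {k : ℕ} {p : Fin k → Fin n → ℝ} {x : Fin n → ℝ}
    (hconf : ∀ i, Conforms (p i) x) (hsum : ∑ i, p i = x) :
    ∑ i, onorm (p i) = onorm x := by
  unfold onorm
  rw [Finset.sum_comm]
  refine Finset.sum_congr rfl fun j _ => ?_
  refine conformal_coord_abs (fun i => p i j) (x j) (fun i hi => hconf i j hi) ?_
  rw [← hsum, Finset.sum_apply]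

lemma onorm_add_le (P Q : Fin n → ℝ) : onorm (P + Q) ≤ onorm P + onorm Q := by
  unfold onorm
  rw [← Finset.sum_add_distrib]
  exact Finset.sum_le_sum fun j _ => by simpa using abs_add_le (P j) (Q j)

lemma onorm_eq_nocancel {P Q : Fin n → ℝ} (h : onorm (P + Q) = onorm P + onorm Q) :
    ∀ j, |P j + Q j| = |P j| + |Q j| := by
  have hsum : ∑ j, (|P j| + |Q j| - |P j + Q j|) = 0 := by
    unfold onorm at h
    simp only [Pi.add_apply] at h
    rw [Finset.sum_sub_distrib, Finset.sum_add_distrib]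
    linarith
  have := (Finset.sum_eq_zero_iff_of_nonneg
    (fun j _ => by simpa using abs_add_le (P j) (Q j))).mp hsum
  intro j
  have := this j (Finset.mem_univ j)
  linarith [this]

/-- decomposition of a sum of two r-paths -/
lemma two_paths {V : Submodule ℝ (Fin n → ℝ)} (hV : IsRegularSpace V) {r : Fin n}
    {P Q : Fin n → ℝ} (hPV : P ∈ V) (hQV : Q ∈ V)
    (hPe : ∀ j, P j ∈ ({-1, 0, 1} : Set ℝ)) (hQe : ∀ j, Q j ∈ ({-1, 0, 1} : Set ℝ))
    (hPr : P r = 1) (hQr : Q r = 1) :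
    ∃ (k : ℕ) (p : Fin k → Fin n → ℝ) (a b : Fin k), a ≠ b ∧
      (∀ i, IsPrimitive V (p i)) ∧ (∀ i, Conforms (p i) (P + Q)) ∧
      (∑ i, p i) = P + Q ∧ p a r = 1 ∧ p b r = 1 ∧
      (∀ i, i ≠ a → i ≠ b → p i r = 0) := by
  classical
  set toZ : ℝ → ℤ := fun u => if u = 1 then 1 else if u = -1 then -1 else 0 with htoZ
  have htoZval : ∀ u : ℝ, u ∈ ({-1, 0, 1} : Set ℝ) → ((toZ u : ℤ) : ℝ) = u := by
    intro u hu
    rcases mem01 hu with h | h | h <;> norm_num [htoZ, h]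
  set z : Fin n → ℤ := fun j => toZ (P j) + toZ (Q j) with hz
  have hxz : ∀ j, (P + Q) j = (z j : ℝ) := by
    intro j
    simp only [Pi.add_apply, hz, Int.cast_add, htoZval _ (hPe j), htoZval _ (hQe j)]
  obtain ⟨k, p, hprim, hconf, hsum⟩ := exists_conformal_decomp hV (∑ j, (z j).natAbs) z (P + Q)
    hxz (add_mem hPV hQV) le_rfl
  have hxr : (P + Q) r = 2 := by rw [Pi.add_apply, hPr, hQr]; norm_num
  have hpr01 : ∀ i, p i r = 0 ∨ p i r = 1 := by
    intro i
    rcases mem01 ((hprim i).2 r) with h | h | h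
    · exfalso
      have := hconf i r (by rw [h]; norm_num)
      rw [h, hxr] at this
      norm_num at this
    · exact Or.inl h
    · exact Or.inr h
  have hsumr : ∑ i, p i r = 2 := by
    have := congrFun hsum r
    rw [Finset.sum_apply] at this
    rw [this, hxr]
  have hcard : (Finset.univ.filter (fun i => p i r = 1)).card = 2 := by
    have h1 : (2:ℝ) = ((Finset.univ.filter (fun i => p i r = 1)).card : ℝ) := by
      rw [← hsumr,
        ← Finset.sum_filter_add_sum_filter_not Finset.univ (fun i => p i r = 1) (fun i => p i r)]
      have e2 : ∑ i ∈ Finset.univ.filter (fun i => ¬ p i r = 1), p i r = 0 :=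
        Finset.sum_eq_zero (fun i hi => (hpr01 i).resolve_right (Finset.mem_filter.mp hi).2)
      rw [e2, add_zero,
        Finset.sum_congr rfl (fun i hi => (Finset.mem_filter.mp hi).2),
        Finset.sum_const, nsmul_eq_mul, mul_one]
    exact_mod_cast h1.symm
  obtain ⟨a, b, hab, hset⟩ := Finset.card_eq_two.mp hcard
  refine ⟨k, p, a, b, hab, hprim, hconf, hsum, ?_, ?_, ?_⟩
  · have : a ∈ Finset.univ.filter (fun i => p i r = 1) := by rw [hset]; simp
    exact (Finset.mem_filter.mp this).2
  · have : b ∈ Finset.univ.filter (fun i => p i r = 1) := by rw [hset]; simp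
    exact (Finset.mem_filter.mp this).2
  · intro i hia hib
    rcases hpr01 i with h | h
    · exact h
    · exfalso
      have : i ∈ Finset.univ.filter (fun i => p i r = 1) :=
        Finset.mem_filter.mpr ⟨Finset.mem_univ i, h⟩
      rw [hset] at this
      simp only [Finset.mem_insert, Finset.mem_singleton] at this
      tauto

/-- The key one-step comparison lemma. -/
lemma key_step {V : Submodule ℝ (Fin n → ℝ)} (hV : IsRegularSpace V) {r : Fin n}
    {c F G P Q : Fin n → ℝ}
    (hF : Feasible c r F) (hsh : ShortestAug V c r F P) (hmax : MaxAug c r F P G)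
    (hQ : Augmenting V c r G Q) :
    onorm P ≤ onorm Q ∧
      (onorm Q ≤ onorm P →
        ∃ M J : Fin n → ℝ, Augmenting V c r F M ∧ Augmenting V c r F J ∧
          onorm M = onorm P ∧ onorm J = onorm P ∧ M + J = P + Q ∧
          (∀ j, P j ≠ 0 → Q j = 0 ∨ Q j = P j)) := by
  classical
  obtain ⟨ε, hε, hG, hGfeas, -⟩ := hmax
  obtain ⟨hQpath, δ, hδ, hQfeas⟩ := hQ
  have hPpath : IsRPath V r P := hsh.1.1
  have hPV : P ∈ V := hPpath.1.1.1
  have hPe : ∀ j, P j ∈ ({-1, 0, 1} : Set ℝ) := hPpath.1.2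
  have hPr : P r = 1 := hPpath.2
  have hQV : Q ∈ V := hQpath.1.1.1
  have hQe : ∀ j, Q j ∈ ({-1, 0, 1} : Set ℝ) := hQpath.1.2
  have hQr : Q r = 1 := hQpath.2
  obtain ⟨k, p, a, b, hab, hprim, hconf, hsum, har, hbr, hother⟩ :=
    two_paths hV hPV hQV hPe hQe hPr hQr
  -- every r-path summand is augmenting for F
  have haug : ∀ i, p i r = 1 → Augmenting V c r F (p i) := by
    intro i hir
    refine ⟨⟨hprim i, hir⟩, min ε δ, lt_min hε hδ, ?_⟩
    intro j hj
    have hFj := hF j hj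
    have hGj' := hGfeas j hj
    have hQj' := hQfeas j hj
    rw [hG] at hGj' hQj'
    simp only [Pi.add_apply, Pi.smul_apply, smul_eq_mul] at hGj' hQj' ⊢
    have hminε : min ε δ ≤ ε := min_le_left _ _
    have hminδ : min ε δ ≤ δ := min_le_right _ _
    have hminpos : 0 < min ε δ := lt_min hε hδ
    rcases mem01 ((hprim i).2 j) with h | h | h
    · -- p i j = -1
      have hx : P j + Q j < 0 := by
        have h2 := hconf i j (by rw [h]; norm_num)
        rw [h] at h2
        simp only [Pi.add_apply] at h2
        nlinarith
      rw [h]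
      rcases mem01 (hPe j) with hP | hP | hP
      · rw [hP] at hGj'
        constructor
        · linarith [hGj'.1]
        · linarith [hFj.2]
      · have hQj : Q j = -1 := by
          rcases mem01 (hQe j) with h' | h' | h'
          · exact h'
          · exfalso; rw [hP, h'] at hx; norm_num at hx
          · exfalso; rw [hP, h'] at hx; norm_num at hx
        rw [hP, hQj] at hQj'
        constructor
        · linarith [hQj'.1]
        · linarith [hFj.2]
      · exfalso
        rcases mem01 (hQe j) with h' | h' | h' <;> rw [hP, h'] at hx <;> norm_num at hx
    · rw [h]
      simpa using hFj
    · -- p i j = 1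
      have hx : 0 < P j + Q j := by
        have h2 := hconf i j (by rw [h]; norm_num)
        rw [h, one_mul] at h2
        simpa only [Pi.add_apply] using h2
      rw [h]
      rcases mem01 (hPe j) with hP | hP | hP
      · exfalso
        rcases mem01 (hQe j) with h' | h' | h' <;> rw [hP, h'] at hx <;> norm_num at hx
      · have hQj : Q j = 1 := by
          rcases mem01 (hQe j) with h' | h' | h'
          · exfalso; rw [hP, h'] at hx; norm_num at hx
          · exfalso; rw [hP, h'] at hx; norm_num at hx
          · exact h'
        rw [hP, hQj] at hQj'
        constructor
        · linarith [hFj.1]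
        · linarith [hQj'.2]
      · rw [hP] at hGj'
        constructor
        · linarith [hFj.1]
        · linarith [hGj'.2]
  have hOPa : onorm P ≤ onorm (p a) := hsh.2 _ (haug a har)
  have hOPb : onorm P ≤ onorm (p b) := hsh.2 _ (haug b hbr)
  have htot : ∑ i, onorm (p i) = onorm (P + Q) := conformal_sum_onorm hconf hsum
  have hle : onorm (P + Q) ≤ onorm P + onorm Q := onorm_add_le P Q
  have hpair : onorm (p a) + onorm (p b) ≤ ∑ i, onorm (p i) := by
    calc onorm (p a) + onorm (p b)
        = ∑ i ∈ ({a, b} : Finset (Fin k)), onorm (p i) := (Finset.sum_pair (f := fun i => onorm (p i)) hab).symm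
      _ ≤ ∑ i, onorm (p i) :=
          Finset.sum_le_sum_of_subset_of_nonneg (Finset.subset_univ _)
            (fun i _ _ => onorm_nonneg _)
  refine ⟨by linarith, ?_⟩
  intro hQle
  have hOP : onorm Q = onorm P := le_antisymm hQle (by linarith)
  have huniv : ∀ i, i = a ∨ i = b := by
    intro i
    by_contra hi
    push_neg at hi
    have hpi : 0 < onorm (p i) := by
      obtain ⟨j, hj⟩ := Function.ne_iff.mp (hprim i).1.2.1
      exact onorm_pos (by simpa using hj)
    have h3 : onorm (p a) + onorm (p b) + onorm (p i) ≤ ∑ i, onorm (p i) := by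
      have hnotmem : a ∉ ({b, i} : Finset (Fin k)) := by
        simp only [Finset.mem_insert, Finset.mem_singleton]
        push_neg
        exact ⟨hab, fun h => hi.1 h.symm⟩
      have hnotmem2 : b ∉ ({i} : Finset (Fin k)) := by
        simp only [Finset.mem_singleton]
        exact fun h => hi.2 h.symm
      calc onorm (p a) + onorm (p b) + onorm (p i)
          = ∑ x ∈ ({a, b, i} : Finset (Fin k)), onorm (p x) := by
            rw [Finset.sum_insert hnotmem, Finset.sum_insert hnotmem2, Finset.sum_singleton]
            ring
        _ ≤ ∑ i, onorm (p i) :=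
            Finset.sum_le_sum_of_subset_of_nonneg (Finset.subset_univ _)
              (fun i _ _ => onorm_nonneg _)
    linarith
  have hsum_pair : ∀ (u : Fin k → ℝ), (∀ i, 0 ≤ u i) → True → ∑ i, u i = u a + u b := by
    intro u _ _
    rw [← Finset.sum_pair hab]
    symm
    apply Finset.sum_subset (Finset.subset_univ _)
    intro i _ hi
    exfalso
    rcases huniv i with h | h <;> subst h <;> simp at hi
  have hMJ : p a + p b = P + Q := by
    rw [← hsum]
    symm
    calc ∑ i, p i = ∑ i ∈ ({a, b} : Finset (Fin k)), p i := by
          symm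
          apply Finset.sum_subset (Finset.subset_univ _)
          intro i _ hi
          exfalso
          rcases huniv i with h | h <;> subst h <;> simp at hi
      _ = p a + p b := Finset.sum_pair (f := p) hab
  have hsplit : ∑ i, onorm (p i) = onorm (p a) + onorm (p b) := by
    calc ∑ i, onorm (p i) = ∑ i ∈ ({a, b} : Finset (Fin k)), onorm (p i) := by
          symm
          apply Finset.sum_subset (Finset.subset_univ _)
          intro i _ hi
          exfalso
          rcases huniv i with h | h <;> subst h <;> simp at hi
      _ = onorm (p a) + onorm (p b) := Finset.sum_pair (f := fun i => onorm (p i)) hab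
  have hpaO : onorm (p a) = onorm P := by linarith
  have hpbO : onorm (p b) = onorm P := by linarith
  have hnc : onorm (P + Q) = onorm P + onorm Q := by linarith
  have hcoord := onorm_eq_nocancel hnc
  refine ⟨p a, p b, haug a har, haug b hbr, hpaO, hpbO, hMJ, ?_⟩
  intro j hPj
  rcases mem01 (hPe j) with hP | hP | hP
  · rcases mem01 (hQe j) with hQ' | hQ' | hQ'
    · right; rw [hQ', hP]
    · left; exact hQ'
    · exfalso; have := hcoord j; rw [hP, hQ'] at this; norm_num at this
  · exact absurd hP hPj
  · rcases mem01 (hQe j) with hQ' | hQ' | hQ'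
    · exfalso; have := hcoord j; rw [hP, hQ'] at this; norm_num at this
    · left; exact hQ'
    · right; rw [hQ', hP]

/-- Maximal augmentation saturates some coordinate. -/
lemma saturation {c : Fin n → ℝ} {r : Fin n} {F P G : Fin n → ℝ}
    (hPe : ∀ j, P j ∈ ({-1, 0, 1} : Set ℝ)) (hmax : MaxAug c r F P G) :
    ∃ j, j ≠ r ∧ P j ≠ 0 ∧ ((P j = 1 ∧ G j = c j) ∨ (P j = -1 ∧ G j = 0)) := by
  classical
  obtain ⟨ε, hε, hG, hGfeas, hmaxl⟩ := hmax
  by_contra hno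
  push_neg at hno
  set T : Finset (Fin n) := Finset.univ.filter (fun j => j ≠ r ∧ P j ≠ 0) with hT
  by_cases hTe : T.Nonempty
  · set slack : Fin n → ℝ := fun j => if P j = 1 then c j - G j else G j with hslack
    have hpos : ∀ j ∈ T, 0 < slack j := by
      intro j hjT
      simp only [hT, Finset.mem_filter, Finset.mem_univ, true_and] at hjT
      obtain ⟨hjr, hPj⟩ := hjT
      have hGj := hGfeas j hjr
      have hno' := hno j hjr hPj
      rcases mem01 (hPe j) with h | h | h
      · simp only [hslack]
        rw [if_neg (by rw [h]; norm_num)]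
        have h9 : G j ≠ 0 := hno'.2 h
        exact lt_of_le_of_ne hGj.1 (Ne.symm h9)
      · exact absurd h hPj
      · simp only [hslack]
        rw [if_pos h]
        have h9 : G j ≠ c j := hno'.1 h
        exact sub_pos.mpr (lt_of_le_of_ne hGj.2 h9)
    set δ : ℝ := (T.image slack).min' (hTe.image slack) with hδ
    have hδpos : 0 < δ := by
      obtain ⟨j0, hj0T, hj0v⟩ : ∃ j ∈ T, slack j = δ := by
        have hmm := (T.image slack).min'_mem (hTe.image slack)
        rw [Finset.mem_image] at hmm
        exact hmm
      rw [← hj0v]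
      exact hpos j0 hj0T
    have hδle : ∀ j ∈ T, δ ≤ slack j := fun j hj =>
      Finset.min'_le _ _ (Finset.mem_image_of_mem _ hj)
    apply hmaxl (ε + δ) (by linarith)
    intro j hj
    have hGj := hGfeas j hj
    rw [hG] at hGj
    simp only [Pi.add_apply, Pi.smul_apply, smul_eq_mul] at hGj ⊢
    by_cases hPj : P j = 0
    · rw [hPj] at hGj ⊢
      simp only [mul_zero, add_zero] at hGj ⊢
      exact hGj
    · have hjT : j ∈ T := by
        simp only [hT, Finset.mem_filter, Finset.mem_univ, true_and]
        exact ⟨hj, hPj⟩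
      have hsl := hδle j hjT
      rcases mem01 (hPe j) with h | h | h
      · simp only [hslack] at hsl
        rw [if_neg (by rw [h]; norm_num)] at hsl
        rw [hG] at hsl
        simp only [Pi.add_apply, Pi.smul_apply, smul_eq_mul] at hsl
        rw [h] at hGj hsl ⊢
        constructor
        · linarith
        · linarith [hGj.2, hδpos]
      · exact absurd h hPj
      · simp only [hslack] at hsl
        rw [if_pos h] at hsl
        rw [hG] at hsl
        simp only [Pi.add_apply, Pi.smul_apply, smul_eq_mul] at hsl
        rw [h] at hGj hsl ⊢
        constructor
        · linarith [hGj.1, hδpos]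
        · linarith [hsl]
  · apply hmaxl (ε + 1) (by linarith)
    intro j hj
    have hPj : P j = 0 := by
      by_contra hP
      exact hTe ⟨j, by simp [hT, hj, hP]⟩
    have := hGfeas j hj
    rw [hG] at this
    simp only [Pi.add_apply, Pi.smul_apply, smul_eq_mul, hPj, mul_zero, add_zero] at this ⊢
    exact this

theorem stmt14 (V : Submodule ℝ (Fin n → ℝ)) (hV : IsRegularSpace V)
    (r : Fin n) (c : Fin n → ℝ) (hc : ∀ j, j ≠ r → 0 ≤ c j)
    (N : ℕ) (f : ℕ → Fin n → ℝ) (h0 : f 0 = 0)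
    (hstep : ∀ i < N, ∃ P, ShortestAug V c r (f i) P ∧ MaxAug c r (f i) P (f (i + 1))) :
    N ≤ n ^ 2 := by
  classical
  obtain ⟨P, hP⟩ : ∃ P : ℕ → Fin n → ℝ, ∀ i, i < N →
      ShortestAug V c r (f i) (P i) ∧ MaxAug c r (f i) (P i) (f (i+1)) := by
    choose g hg using hstep
    exact ⟨fun i => if h : i < N then g i h else 0, fun i h => by simp only [dif_pos h]; exact hg i h⟩
  have hPaug : ∀ i, i < N → Augmenting V c r (f i) (P i) := fun i hi => (hP i hi).1.1
  have hPe : ∀ i, i < N → ∀ j, P i j ∈ ({-1, 0, 1} : Set ℝ) :=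
    fun i hi => (hP i hi).1.1.1.1.2
  have hPr : ∀ i, i < N → P i r = 1 := fun i hi => (hP i hi).1.1.1.2
  have hfeas : ∀ i, i ≤ N → Feasible c r (f i) := by
    intro i
    induction i with
    | zero =>
      intro _
      rw [h0]
      intro j hj
      refine ⟨le_refl 0, ?_⟩
      simpa using hc j hj
    | succ i ih =>
      intro h
      obtain ⟨ε, hε, hEq, hFe, hml⟩ := (hP i (by omega)).2
      exact hFe
  obtain ⟨jt, hjt⟩ : ∃ jt : ℕ → Fin n, ∀ i, i < N → jt i ≠ r ∧ P i (jt i) ≠ 0 ∧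
      ((P i (jt i) = 1 ∧ f (i+1) (jt i) = c (jt i)) ∨
       (P i (jt i) = -1 ∧ f (i+1) (jt i) = 0)) := by
    have hsat : ∀ i, i < N → ∃ j, j ≠ r ∧ P i j ≠ 0 ∧
        ((P i j = 1 ∧ f (i+1) j = c j) ∨ (P i j = -1 ∧ f (i+1) j = 0)) :=
      fun i hi => saturation (hPe i hi) (hP i hi).2
    choose g hg using hsat
    exact ⟨fun i => if h : i < N then g i h else r, fun i h => by simp only [dif_pos h]; exact hg i h⟩
  set len : ℕ → ℕ := fun i => (Finset.univ.filter (fun j => P i j ≠ 0)).card with hlen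
  have honormlen : ∀ i, i < N → onorm (P i) = (len i : ℝ) := by
    intro i hi
    rw [hlen]
    unfold onorm
    rw [← Finset.sum_boole]
    refine Finset.sum_congr rfl fun j _ => ?_
    rcases mem01 (hPe i hi j) with h | h | h <;> norm_num [h]
  have hmono1 : ∀ i, i + 1 < N → onorm (P i) ≤ onorm (P (i+1)) := by
    intro i h
    exact (key_step hV (hfeas i (by omega)) (hP i (by omega)).1 (hP i (by omega)).2
      (hPaug (i+1) h)).1
  have hmonoO : ∀ d aa, aa + d < N → onorm (P aa) ≤ onorm (P (aa + d)) := by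
    intro d
    induction d with
    | zero => intro aa _; simp
    | succ d ih =>
      intro aa h
      have h1 : aa + d + 1 < N := by omega
      calc onorm (P aa) ≤ onorm (P (aa + d)) := ih aa (by omega)
        _ ≤ onorm (P (aa + d + 1)) := hmono1 (aa + d) h1
        _ = onorm (P (aa + (d+1))) := by rw [show aa + d + 1 = aa + (d+1) from by omega]
  have hmonoN : ∀ a b, a ≤ b → b < N → len a ≤ len b := by
    intro a b hab hbN
    have h1 := hmonoO (b - a) a (by omega)
    rw [show a + (b - a) = b from by omega] at h1
    rw [honormlen a (by omega), honormlen b hbN] at h1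
    exact_mod_cast h1
  -- the phase invariant
  have hphase : ∀ d i, i + d < N → len i = len (i + d) →
      ∀ t, i ≤ t → t < i + d →
        (((P t (jt t) = 1 → f (i + d) (jt t) = c (jt t)) ∧
          (P t (jt t) = -1 → f (i + d) (jt t) = 0)) ∧
         (∀ Q, Augmenting V c r (f (i + d)) Q → onorm Q = onorm (P i) → Q (jt t) = 0)) := by
    intro d
    induction d with
    | zero => intro i h hl t ht1 ht2; omega
    | succ d ih =>
      intro i hiN hileq t ht1 ht2
      have hsucc : i + (d + 1) = (i + d) + 1 := by omega
      set m := i + d with hm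
      have hmN : m < N := by omega
      have hlid : len i = len m :=
        le_antisymm (hmonoN i m (by omega) hmN)
          (by rw [hileq, hsucc]; exact hmonoN m (m+1) (by omega) (by omega))
      have hOeq : onorm (P m) = onorm (P i) := by
        rw [honormlen m hmN, honormlen i (by omega), hlid]
      rw [hsucc] at ht2 ⊢
      have hks : ∀ Q, Augmenting V c r (f (m+1)) Q → onorm Q = onorm (P i) →
          ∃ M J : Fin n → ℝ, Augmenting V c r (f m) M ∧ Augmenting V c r (f m) J ∧
            onorm M = onorm (P m) ∧ onorm J = onorm (P m) ∧ M + J = P m + Q ∧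
            (∀ j, P m j ≠ 0 → Q j = 0 ∨ Q j = P m j) := by
        intro Q hQaug hQnorm
        exact (key_step hV (hfeas m (by omega)) (hP m hmN).1 (hP m hmN).2 hQaug).2
          (by rw [hQnorm, hOeq])
      by_cases htm : t = m
      · rw [← htm] at hks
        have htN : t < N := by omega
        constructor
        · constructor
          · intro h1
            rcases (hjt t htN).2.2 with ⟨_, hv⟩ | ⟨hs, _⟩
            · rw [← htm]; exact hv
            · exfalso; rw [h1] at hs; norm_num at hs
          · intro h1
            rcases (hjt t htN).2.2 with ⟨hs, _⟩ | ⟨_, hv⟩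
            · exfalso; rw [h1] at hs; norm_num at hs
            · rw [← htm]; exact hv
        · intro Q hQaug hQnorm
          rw [← htm] at hQaug
          obtain ⟨M, J, hMaug, hJaug, hMO, hJO, hMJ, hnc⟩ := hks Q hQaug hQnorm
          rcases hnc (jt t) (hjt t htN).2.1 with h | h
          · exact h
          · exfalso
            obtain ⟨-, η, hη, hQfe⟩ := hQaug
            have hfe := hQfe (jt t) (hjt t htN).1
            simp only [Pi.add_apply, Pi.smul_apply, smul_eq_mul] at hfe
            rcases (hjt t htN).2.2 with ⟨hs, hv⟩ | ⟨hs, hv⟩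
            · rw [hv, h, hs] at hfe
              linarith [hfe.2]
            · rw [hv, h, hs] at hfe
              linarith [hfe.1]
      · have htm' : t < m := by omega
        have iht := ih i hmN hlid t ht1 htm'
        have hPm0 : P m (jt t) = 0 := iht.2 (P m) (hPaug m hmN) hOeq
        have hfm1 : f (m+1) (jt t) = f m (jt t) := by
          obtain ⟨ε, hε, hEq, -, -⟩ := (hP m hmN).2
          rw [hEq]
          simp [hPm0]
        constructor
        · exact ⟨fun h1 => by rw [hfm1]; exact iht.1.1 h1,
            fun h1 => by rw [hfm1]; exact iht.1.2 h1⟩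
        · intro Q hQaug hQnorm
          obtain ⟨M, J, hMaug, hJaug, hMO, hJO, hMJ, hnc⟩ := hks Q hQaug hQnorm
          have hM0 : M (jt t) = 0 := iht.2 M hMaug (hMO.trans hOeq)
          have hJ0 : J (jt t) = 0 := iht.2 J hJaug (hJO.trans hOeq)
          have hcf := congrFun hMJ (jt t)
          simp only [Pi.add_apply] at hcf
          rw [hM0, hJ0, hPm0] at hcf
          linarith
  -- distinct saturated coordinates within a phase
  have hinj : ∀ t u, t < u → u < N → len t = len u → jt t ≠ jt u := by
    intro t u htu huN hlen'
    have hdu : t + (u - t) = u := by omega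
    have hp2 := hphase (u - t) t
    rw [hdu] at hp2
    have ht' := hp2 huN hlen' t le_rfl htu
    have hz := ht'.2 (P u) (hPaug u huN)
      (by rw [honormlen u huN, honormlen t (by omega), hlen'])
    intro hEq
    have := (hjt u huN).2.1
    rw [← hEq] at this
    exact this hz
  -- counting
  have hlen1 : ∀ i, i < N → 1 ≤ len i ∧ len i ≤ n := by
    intro i hi
    constructor
    · have hmem : r ∈ Finset.univ.filter (fun j => P i j ≠ 0) := by
        simp only [Finset.mem_filter, Finset.mem_univ, true_and]
        rw [hPr i hi]
        norm_num
      have hpos := Finset.card_pos.mpr ⟨r, hmem⟩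
      simp only [hlen]
      omega
    · simp only [hlen]
      have := Finset.card_filter_le Finset.univ (fun j => P i j ≠ 0)
      simpa using this
  have hmain := Finset.card_le_card_of_injOn (fun t => ((len t, jt t) : ℕ × Fin n))
    (s := Finset.range N) (t := (Finset.Icc 1 n) ×ˢ (Finset.univ.erase r))
    (by
      intro a ha
      simp only [Finset.coe_range, Set.mem_Iio] at ha
      rw [Finset.mem_coe, Finset.mem_product]
      refine ⟨Finset.mem_Icc.mpr ⟨(hlen1 a ha).1, (hlen1 a ha).2⟩, ?_⟩
      exact Finset.mem_erase.mpr ⟨(hjt a ha).1, Finset.mem_univ _⟩)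
    (by
      intro a ha b hb hEq
      simp only [Finset.coe_range, Set.mem_Iio] at ha hb
      simp only [Prod.mk.injEq] at hEq
      by_contra hne
      rcases lt_or_gt_of_ne hne with h | h
      · exact hinj a b h hb hEq.1 hEq.2
      · exact hinj b a h ha hEq.1.symm hEq.2.symm)
  rw [Finset.card_range, Finset.card_product, Nat.card_Icc] at hmain
  have h2 : (Finset.univ.erase r).card = n - 1 := by
    rw [Finset.card_erase_of_mem (Finset.mem_univ r)]
    simp
  rw [h2] at hmain
  calc N ≤ (n + 1 - 1) * (n - 1) := hmain
    _ ≤ n * n := by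
        have : n + 1 - 1 = n := by omega
        rw [this]
        exact Nat.mul_le_mul_left n (Nat.sub_le n 1)
    _ = n ^ 2 := (sq n).symm
end

section
/- Let V ⊆ ℝ^n be a regular space, f a feasible flow, and f' another feasible flow with f'_r > f_r. Then there exists an augmenting r-path P for f; moreover P can be chosen so that f + λP is feasible for some λ > 0 and P conforms to f' - f. -/
open Finset

variable {n : ℕ}

open scoped Matrix

section Aux

noncomputable def fsupp (x : Fin n → ℝ) : Finset (Fin n) :=
  @Finset.filter _ (fun j => x j ≠ 0) (Classical.decPred _) Finset.univ

lemma mem_fsupp {x : Fin n → ℝ} {j : Fin n} : j ∈ fsupp x ↔ x j ≠ 0 := by simp [fsupp]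

lemma coe_fsupp (x : Fin n → ℝ) : (fsupp x : Set (Fin n)) = supp x := by
  ext j; simp [mem_fsupp, supp]

lemma card_lt_of_ssubset {x y : Fin n → ℝ} (h : supp y ⊂ supp x) :
    (fsupp y).card < (fsupp x).card := by
  apply Finset.card_lt_card
  rw [← Finset.coe_ssubset, coe_fsupp, coe_fsupp]; exact h

lemma mul_pos_trans {a b c : ℝ} (h1 : a * b > 0) (h2 : b * c > 0) : a * c > 0 := by
  rcases mul_pos_iff.mp h1 with ⟨ha, hb⟩ | ⟨ha, hb⟩ <;>
    rcases mul_pos_iff.mp h2 with ⟨hb', hc⟩ | ⟨hb', hc⟩ <;>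
    first
      | exact mul_pos ha hc
      | exact mul_pos_of_neg_of_neg ha hc
      | linarith

/-- existence of an elementary vector with support inside supp x -/
lemma exists_elementary (V : Submodule ℝ (Fin n → ℝ)) :
    ∀ N (x : Fin n → ℝ), (fsupp x).card ≤ N → x ∈ V → x ≠ 0 →
      ∃ y, IsElementary V y ∧ supp y ⊆ supp x := by
  intro N
  induction N with
  | zero =>
    intro x hcard hxV hx0
    exfalso
    obtain ⟨j, hj⟩ := Function.ne_iff.mp hx0
    have : j ∈ fsupp x := mem_fsupp.mpr hj
    have := Finset.card_pos.mpr ⟨j, this⟩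
    omega
  | succ N ih =>
    intro x hcard hxV hx0
    by_cases hE : ∀ y ∈ V, y ≠ 0 → ¬ (supp y ⊂ supp x)
    · exact ⟨x, ⟨hxV, hx0, hE⟩, subset_rfl⟩
    · push_neg at hE
      obtain ⟨y, hyV, hy0, hss⟩ := hE
      have hlt := card_lt_of_ssubset hss
      obtain ⟨z, hz, hzs⟩ := ih y (by omega) hyV hy0
      exact ⟨z, hz, hzs.trans hss.subset⟩

lemma smul_elementary {V : Submodule ℝ (Fin n → ℝ)} {x : Fin n → ℝ} {a : ℝ}
    (hx : IsElementary V x) (ha : a ≠ 0) : IsElementary V (a • x) := by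
  obtain ⟨hxV, hx0, hmin⟩ := hx
  have hsupp : supp (a • x) = supp x := by
    ext j; simp [supp, Pi.smul_apply, smul_eq_mul, mul_ne_zero_iff, ha]
  exact ⟨V.smul_mem a hxV, smul_ne_zero ha hx0, by rw [hsupp]; exact hmin⟩

/-- the subtraction step -/
lemma step (V : Submodule ℝ (Fin n → ℝ)) (x w : Fin n → ℝ) (hxV : x ∈ V) (hwV : w ∈ V)
    (hsub : supp w ⊆ supp x) (k : Fin n) (hk : x k ≠ 0) (hkw : w k * x k ≤ 0)
    (hP : ∃ j, w j * x j > 0) :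
    ∃ x', x' ∈ V ∧ x' k ≠ 0 ∧ (∀ j, x' j ≠ 0 → x' j * x j > 0) ∧
      (fsupp x').card < (fsupp x).card := by
  classical
  set P : Finset (Fin n) := Finset.univ.filter (fun j => w j * x j > 0) with hPdef
  have hPne : P.Nonempty := by
    obtain ⟨j, hj⟩ := hP
    exact ⟨j, by simp [hPdef, hj]⟩
  set lam : ℝ := P.inf' hPne (fun j => x j / w j) with hlam
  have hratio : ∀ j ∈ P, 0 < x j / w j := by
    intro j hj
    rw [hPdef, Finset.mem_filter] at hj
    rcases mul_pos_iff.mp hj.2 with ⟨hw, hx⟩ | ⟨hw, hx⟩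
    · exact div_pos hx hw
    · exact div_pos_of_neg_of_neg hx hw
  have hlampos : 0 < lam := by
    rw [hlam, Finset.lt_inf'_iff]
    exact hratio
  obtain ⟨j₀, hj₀P, hj₀⟩ := Finset.exists_mem_eq_inf' hPne (fun j => x j / w j)
  refine ⟨x - lam • w, V.sub_mem hxV (V.smul_mem _ hwV), ?_, ?_, ?_⟩
  · -- x' k ≠ 0
    intro h0
    have h0' : x k - lam * w k = 0 := by simpa using congrArg id h0
    have h1 : lam * (w k * x k) ≤ 0 := mul_nonpos_of_nonneg_of_nonpos hlampos.le hkw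
    have h2 : x k * x k = lam * (w k * x k) := by
      have hxe : x k = lam * w k := by linarith
      rw [hxe]; ring
    linarith [mul_self_pos.mpr hk, h1, h2]
  · -- conformality to x
    intro j hj
    have hj' : x j - lam * w j ≠ 0 := by simpa using hj
    have hgoal : (x j - lam * w j) * x j > 0 → (x - lam • w) j * x j > 0 := by
      intro h; simpa using h
    apply hgoal
    rcases lt_trichotomy (w j * x j) 0 with hc | hc | hc
    · nlinarith [mul_self_pos.mpr (show x j ≠ 0 by intro h; rw [h] at hc; simp at hc)]
    · -- w j * x j = 0
      rcases mul_eq_zero.mp hc with hw0 | hx0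
      · rw [hw0] at hj' ⊢
        simp only [mul_zero, sub_zero] at hj' ⊢
        exact mul_self_pos.mpr hj'
      · exfalso
        by_cases hw0 : w j = 0
        · rw [hw0] at hj'; rw [hx0] at hj'; simp at hj'
        · exact (hsub hw0) hx0
    · -- j ∈ P
      have hjP : j ∈ P := by simp [hPdef, hc]
      have hle : lam ≤ x j / w j := by
        rw [hlam]; exact Finset.inf'_le _ hjP
      rcases mul_pos_iff.mp hc with ⟨hw, hx⟩ | ⟨hw, hx⟩
      · have : lam * w j ≤ x j := (le_div_iff₀ hw).mp hle
        have h1 : 0 ≤ x j - lam * w j := by linarith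
        have h2 : 0 < x j - lam * w j := lt_of_le_of_ne h1 (Ne.symm hj')
        exact mul_pos h2 hx
      · have : x j ≤ lam * w j := (le_div_iff_of_neg hw).mp hle
        have h2 : x j - lam * w j < 0 := lt_of_le_of_ne (by linarith) hj'
        exact mul_pos_of_neg_of_neg h2 hx
  · -- card decrease
    apply Finset.card_lt_card
    constructor
    · intro j hj
      rw [mem_fsupp] at hj ⊢
      intro hx0
      apply hj
      by_cases hw0 : w j = 0
      · simp [hw0, hx0]
      · exact absurd hx0 (hsub hw0)
    · intro hsup
      have hj₀x : x j₀ ≠ 0 := by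
        rw [hPdef, Finset.mem_filter] at hj₀P
        intro h; rw [h] at hj₀P; simp at hj₀P
      have hwj₀ : w j₀ ≠ 0 := by
        rw [hPdef, Finset.mem_filter] at hj₀P
        intro h; rw [h] at hj₀P; simp at hj₀P
      have : (x - lam • w) j₀ = 0 := by
        simp only [Pi.sub_apply, Pi.smul_apply, smul_eq_mul]
        rw [hlam, hj₀]; field_simp; ring
      have hmem := hsup (mem_fsupp.mpr hj₀x)
      rw [mem_fsupp] at hmem
      exact hmem this

lemma neg_elementary {V : Submodule ℝ (Fin n → ℝ)} {x : Fin n → ℝ}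
    (hx : IsElementary V x) : IsElementary V (-x) := by
  have := smul_elementary hx (a := -1) (by norm_num)
  simpa using this

/-- key lemma: conforming elementary vector hitting a given coordinate -/
lemma exists_conform (V : Submodule ℝ (Fin n → ℝ)) :
    ∀ N (x : Fin n → ℝ), (fsupp x).card ≤ N → x ∈ V → ∀ k, x k ≠ 0 →
      ∃ z, IsElementary V z ∧ Conforms z x ∧ z k ≠ 0 := by
  intro N
  induction N with
  | zero =>
    intro x hcard hxV k hk
    exact absurd (Finset.card_pos.mpr ⟨k, mem_fsupp.mpr hk⟩) (by omega)
  | succ N ih =>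
    intro x hcard hxV k hk
    have hx0 : x ≠ 0 := fun h => hk (by rw [h]; rfl)
    obtain ⟨y, hyE, hysub⟩ := exists_elementary V (N+1) x hcard hxV hx0
    have hyV : y ∈ V := hyE.1
    have hy0 : y ≠ 0 := hyE.2.1
    have hsuppneg : supp (-y : Fin n → ℝ) = supp y := by
      ext j; simp [supp]
    -- helper to finish from a step result
    have finish : ∀ w : Fin n → ℝ, w ∈ V → supp w ⊆ supp x → w k * x k ≤ 0 →
        (∃ j, w j * x j > 0) → ∃ z, IsElementary V z ∧ Conforms z x ∧ z k ≠ 0 := by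
      intro w hwV hwsub hwk hwP
      obtain ⟨x', hx'V, hx'k, hx'conf, hx'card⟩ :=
        step V x w hxV hwV hwsub k hk hwk hwP
      obtain ⟨z, hzE, hzconf, hzk⟩ := ih x' (by omega) hx'V k hx'k
      refine ⟨z, hzE, ?_, hzk⟩
      intro j hj
      have h1 := hzconf j hj
      have h2 : x' j ≠ 0 := by
        intro h; rw [h] at h1; simp at h1
      exact mul_pos_trans h1 (hx'conf j h2)
    have hysupp : supp y ⊆ supp x := hysub
    have hnegsub : supp (-y : Fin n → ℝ) ⊆ supp x := by rw [hsuppneg]; exact hysupp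
    rcases lt_trichotomy (y k * x k) 0 with hyk | hyk | hyk
    · -- y k * x k < 0
      by_cases hP : ∃ j, y j * x j > 0
      · exact finish y hyV hysupp (le_of_lt hyk) hP
      · -- -y conforms to x
        push_neg at hP
        have hyk0 : y k ≠ 0 := fun h => by rw [h] at hyk; simp at hyk
        refine ⟨-y, neg_elementary hyE, ?_, by simpa using hyk0⟩
        intro j hj
        have hyj : y j ≠ 0 := by simpa using hj
        have hxj : x j ≠ 0 := hysupp hyj
        have hne : y j * x j ≠ 0 := mul_ne_zero hyj hxj
        have hneg : y j * x j < 0 := lt_of_le_of_ne (hP j) hne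
        have : (-y : Fin n → ℝ) j = -(y j) := rfl
        rw [this]; nlinarith
    · -- y k * x k = 0, so y k = 0
      have hyk0 : y k = 0 := by
        rcases mul_eq_zero.mp hyk with h | h
        · exact h
        · exact absurd h hk
      obtain ⟨j1, hj1⟩ := Function.ne_iff.mp hy0
      have hj1' : y j1 ≠ 0 := by simpa using hj1
      have hxj1 : x j1 ≠ 0 := hysupp hj1'
      have hne : y j1 * x j1 ≠ 0 := mul_ne_zero hj1' hxj1
      rcases hne.lt_or_gt with hneg | hpos
      · -- use -y
        refine finish (-y) (V.neg_mem hyV) hnegsub ?_ ⟨j1, ?_⟩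
        · have : (-y : Fin n → ℝ) k = -(y k) := rfl
          rw [this, hyk0]; simp
        · have : (-y : Fin n → ℝ) j1 = -(y j1) := rfl
          rw [this]; nlinarith
      · exact finish y hyV hysupp (by rw [hyk0]; simp) ⟨j1, hpos⟩
    · -- y k * x k > 0
      by_cases hN : ∃ j, y j * x j < 0
      · obtain ⟨j1, hj1⟩ := hN
        refine finish (-y) (V.neg_mem hyV) hnegsub ?_ ⟨j1, ?_⟩
        · have : (-y : Fin n → ℝ) k = -(y k) := rfl
          rw [this]; nlinarith
        · have : (-y : Fin n → ℝ) j1 = -(y j1) := rfl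
          rw [this]; nlinarith
      · -- y conforms to x
        push_neg at hN
        refine ⟨y, hyE, ?_, fun h => by rw [h] at hyk; simp at hyk⟩
        intro j hj
        have hxj : x j ≠ 0 := hysupp hj
        exact lt_of_le_of_ne (hN j) (Ne.symm (mul_ne_zero hj hxj))

set_option maxHeartbeats 1600000 in
lemma elementary_pm {m : ℕ} (A : Matrix (Fin m) (Fin n) ℝ) (hA : A.IsTotallyUnimodular)
    (V : Submodule ℝ (Fin n → ℝ)) (hV : V = LinearMap.ker A.mulVecLin)
    (z : Fin n → ℝ) (hz : IsElementary V z) (k : Fin n) (hk : z k ≠ 0) :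
    ∀ j, z j = z k ∨ z j = - z k ∨ z j = 0 := by
  classical
  set T : Finset (Fin n) := Finset.univ.filter (fun j => z j ≠ 0 ∧ j ≠ k) with hTdef
  have hmemT : ∀ jn, jn ∈ T ↔ (z jn ≠ 0 ∧ jn ≠ k) := by
    intro jn; simp [hTdef]
  set t : ℕ := T.card with htdef
  set e : Fin t ≃o {x // x ∈ T} := T.orderIsoOfFin rfl with hedef
  set ι : Fin t → Fin n := fun i => (e i : Fin n) with hιdef
  have hιmem : ∀ i, ι i ∈ T := fun i => (e i).2
  have hιinj : Function.Injective ι := fun a b h => by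
    apply e.injective; exact Subtype.ext h
  have hιsymm : ∀ (jn : Fin n) (h : jn ∈ T), ι (e.symm ⟨jn, h⟩) = jn := by
    intro jn h
    show ((e (e.symm ⟨jn, h⟩)) : Fin n) = jn
    rw [OrderIso.apply_symm_apply]
  have hkT : k ∉ T := by
    rw [hmemT]; simp
  -- reindexing sums over T
  have hreidx : ∀ F : Fin n → ℝ, ∑ jn ∈ T, F jn = ∑ j : Fin t, F (ι j) := by
    intro F
    rw [← Finset.sum_coe_sort T]
    exact (Equiv.sum_comp e.toEquiv (fun x : {x // x ∈ T} => F x)).symm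
  have hAz : A *ᵥ z = 0 := by
    have : z ∈ LinearMap.ker A.mulVecLin := hV ▸ hz.1
    simpa [Matrix.mulVecLin_apply] using this
  -- Step 1: the columns indexed by T are linearly independent
  have hcols : LinearIndependent ℝ (fun j : Fin t => (fun i => A i (ι j))) := by
    rw [Fintype.linearIndependent_iff]
    intro c hc
    set w : Fin n → ℝ := fun jn => if h : jn ∈ T then c (e.symm ⟨jn, h⟩) else 0 with hwdef
    have hwι : ∀ j, w (ι j) = c j := by
      intro j
      rw [hwdef]
      simp only
      rw [dif_pos (hιmem j)]
      congr 1
      have heq : (⟨ι j, hιmem j⟩ : {x // x ∈ T}) = e j := Subtype.ext rfl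
      rw [heq, OrderIso.symm_apply_apply]
    have hwT : ∀ jn, w jn ≠ 0 → jn ∈ T := by
      intro jn h
      by_contra hmem
      rw [hwdef] at h; simp only at h; rw [dif_neg hmem] at h; exact h rfl
    have hwV : w ∈ V := by
      rw [hV, LinearMap.mem_ker]
      ext i
      rw [Matrix.mulVecLin_apply]
      have h1 : (A *ᵥ w) i = ∑ jn, A i jn * w jn := rfl
      have h2 : ∑ jn, A i jn * w jn = ∑ jn ∈ T, A i jn * w jn := by
        symm
        apply Finset.sum_subset (Finset.subset_univ T)
        intro jn _ hjn
        have : w jn = 0 := by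
          by_contra h; exact hjn (hwT jn h)
        rw [this, mul_zero]
      have h3 : ∑ jn ∈ T, A i jn * w jn = ∑ j : Fin t, A i (ι j) * w (ι j) :=
        hreidx (fun jn => A i jn * w jn)
      have h4 := congrFun hc i
      simp only [Finset.sum_apply, Pi.smul_apply, smul_eq_mul, Pi.zero_apply] at h4
      rw [h1, h2, h3]
      simp only [hwι, Pi.zero_apply]
      rw [← h4]
      exact Finset.sum_congr rfl (fun x _ => mul_comm _ _)
    intro j
    by_contra hcj
    have hw0 : w ≠ 0 := by
      intro h
      have := hwι j
      rw [h] at this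
      exact hcj (by simpa using this.symm)
    have hss : supp w ⊂ supp z := by
      constructor
      · intro jn hjn
        have := hwT jn hjn
        exact ((hmemT jn).mp this).1
      · intro hsub
        have : w k ≠ 0 := by
          apply hsub
          exact hk
        exact this (by rw [hwdef]; simp only; rw [dif_neg hkT])
    exact hz.2.2 w hwV hw0 hss
  -- Step 2: find rows g making an invertible square submatrix
  set M : Matrix (Fin m) (Fin t) ℝ := A.submatrix id ι with hMdef
  have hMT : LinearIndependent ℝ (fun j : Fin t => Mᵀ j) := hcols
  have hMTrank : Mᵀ.rank = t := by
    have := LinearIndependent.rank_matrix (M := Mᵀ) hMT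
    simpa using this
  have hMrank : M.rank = t := by
    rw [← Matrix.rank_transpose]; exact hMTrank
  have hspan : Submodule.span ℝ (Set.range M) = ⊤ := by
    apply Submodule.eq_top_of_finrank_eq
    have h1 : M.rank = Module.finrank ℝ (Submodule.span ℝ (Set.range M)) := M.rank_eq_finrank_span_row
    rw [hMrank] at h1
    rw [← h1, Module.finrank_pi]
    simp
  obtain ⟨s, hssub, hsspan, hsind⟩ := exists_linearIndependent ℝ (Set.range M)
  rw [hspan] at hsspan
  have hsfin : s.Finite := hsind.setFinite
  haveI := hsfin.fintype
  have hb : Module.Basis s ℝ (Fin t → ℝ) := Module.Basis.mk hsind (by rw [Subtype.range_coe, hsspan])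
  have hcard : Fintype.card s = t := by
    have := Module.finrank_eq_card_basis hb
    rw [Module.finrank_pi] at this
    simp only [Fintype.card_fin] at this
    omega
  set e2 : Fin t ≃ s := (Fintype.equivFinOfCardEq hcard).symm with he2def
  have hpre : ∀ v : s, ∃ i : Fin m, M i = v := fun v => hssub v.2
  choose gg hgg using hpre
  set g : Fin t → Fin m := fun i => gg (e2 i) with hgdef
  have hginj : Function.Injective g := by
    intro a b hab
    apply e2.injective
    apply Subtype.ext
    rw [← hgg (e2 a), ← hgg (e2 b), hgdef] at *
    simp only at hab
    rw [hab]
  set B : Matrix (Fin t) (Fin t) ℝ := A.submatrix g ι with hBdef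
  have hBrows : (fun i : Fin t => B i) = fun i => ((e2 i : s) : Fin t → ℝ) := by
    funext i
    have : B i = M (g i) := rfl
    rw [this, hgdef]
    simp only
    rw [hgg (e2 i)]
  have hBind : LinearIndependent ℝ (fun i : Fin t => B i) := by
    rw [hBrows]
    exact hsind.comp e2 e2.injective
  have hBunit : IsUnit B := Matrix.linearIndependent_rows_iff_isUnit.mp hBind
  have hBdetne : B.det ≠ 0 := by
    have := (Matrix.isUnit_iff_isUnit_det B).mp hBunit
    exact IsUnit.ne_zero this
  have hBdet1 : B.det = 1 ∨ B.det = -1 := by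
    obtain ⟨sg, hsg⟩ := hA t g ι hginj hιinj
    rw [← hBdef] at hsg
    cases sg with
    | zero => exfalso; apply hBdetne; rw [← hsg]; simp
    | pos => left; rw [← hsg]; simp
    | neg => right; rw [← hsg]; simp
  -- Step 3: Cramer's rule
  set xv : Fin t → ℝ := fun j => z (ι j) with hxvdef
  set cv : Fin t → ℝ := fun i => -(z k) * A (g i) k with hcvdef
  have hBx : B *ᵥ xv = cv := by
    ext i
    have h0 : (A *ᵥ z) (g i) = 0 := by rw [hAz]; rfl
    have h1 : (A *ᵥ z) (g i) = ∑ jn, A (g i) jn * z jn := rfl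
    have h2 : ∑ jn, A (g i) jn * z jn = ∑ jn ∈ insert k T, A (g i) jn * z jn := by
      symm
      apply Finset.sum_subset (Finset.subset_univ _)
      intro jn _ hjn
      rw [Finset.mem_insert] at hjn
      push_neg at hjn
      have : z jn = 0 := by
        by_contra hzjn
        exact hjn.2 ((hmemT jn).mpr ⟨hzjn, hjn.1⟩)
      rw [this, mul_zero]
    rw [Finset.sum_insert hkT] at h2
    have h3 : ∑ jn ∈ T, A (g i) jn * z jn = ∑ j : Fin t, A (g i) (ι j) * z (ι j) :=
      hreidx _
    have h4 : (B *ᵥ xv) i = ∑ j : Fin t, A (g i) (ι j) * z (ι j) := rfl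
    rw [h4, ← h3]
    have : A (g i) k * z k + ∑ jn ∈ T, A (g i) jn * z jn = 0 := by
      rw [← h2, ← h1, h0]
    rw [hcvdef]
    simp only
    linarith
  have hcramer : Matrix.cramer B cv = B.det • xv := by
    have h1 := Matrix.mulVec_cramer B cv
    have h2 : B *ᵥ (B.det • xv) = B.det • cv := by
      rw [Matrix.mulVec_smul, hBx]
    have hinj : Function.Injective (B.mulVec) := Matrix.mulVec_injective_iff_isUnit.mpr hBunit
    apply hinj
    rw [h1, h2]
  -- conclude each entry
  have key : ∀ j : Fin t, z (ι j) = z k ∨ z (ι j) = - z k := by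
    intro j
    have h1 : B.det * z (ι j) = (B.updateCol j cv).det := by
      have h0 := congrFun hcramer j
      rw [Matrix.cramer_apply] at h0
      rw [h0]
      simp [hxvdef]
    have hcveq : cv = (-(z k)) • (fun i => A (g i) k) := by
      funext i; simp [hcvdef]
    have h2 : (B.updateCol j cv).det
        = -(z k) * (A.submatrix g (Function.update ι j k)).det := by
      have hmat : B.updateCol j (fun i => A (g i) k)
          = A.submatrix g (Function.update ι j k) := by
        ext i j'
        by_cases hj' : j' = j
        · subst hj'
          simp [Matrix.updateCol_apply, Function.update_apply]
        · simp only [Matrix.updateCol_apply, Function.update_apply, hj',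
            if_false, Matrix.submatrix_apply]
          rfl
      rw [hcveq, Matrix.det_updateCol_smul, hmat]
    have hinj2 : Function.Injective (Function.update ι j k) := by
      intro a b hab
      rcases eq_or_ne a j with ha | ha <;> rcases eq_or_ne b j with hb | hb
      · rw [ha, hb]
      · exfalso
        rw [ha] at hab
        rw [Function.update_self, Function.update_of_ne hb] at hab
        exact ((hmemT (ι b)).mp (hιmem b)).2 hab.symm
      · exfalso
        rw [hb] at hab
        rw [Function.update_self, Function.update_of_ne ha] at hab
        exact ((hmemT (ι a)).mp (hιmem a)).2 hab
      · rw [Function.update_of_ne ha, Function.update_of_ne hb] at hab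
        exact hιinj hab
    obtain ⟨sg, hsg⟩ := hA t g (Function.update ι j k) hginj hinj2
    have hzι : z (ι j) ≠ 0 := ((hmemT (ι j)).mp (hιmem j)).1
    have hd : (A.submatrix g (Function.update ι j k)).det = 0
        ∨ (A.submatrix g (Function.update ι j k)).det = 1
        ∨ (A.submatrix g (Function.update ι j k)).det = -1 := by
      cases sg with
      | zero => left; rw [← hsg]; simp
      | pos => right; left; rw [← hsg]; simp
      | neg => right; right; rw [← hsg]; simp
    rw [h2] at h1
    rcases hBdet1 with hB1 | hB1 <;> rw [hB1] at h1 <;>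
      rcases hd with hd | hd | hd <;> rw [hd] at h1 <;>
      [skip; skip; skip; skip; skip; skip] <;>
      first
        | (exfalso; apply hzι; linarith)
        | (left; linarith)
        | (right; linarith)
  intro j
  by_cases hjk : j = k
  · left; rw [hjk]
  · by_cases hzj : z j = 0
    · right; right; exact hzj
    · have hjT : j ∈ T := (hmemT j).mpr ⟨hzj, hjk⟩
      have := key (e.symm ⟨j, hjT⟩)
      rw [hιsymm j hjT] at this
      rcases this with h | h
      · left; exact h
      · right; left; exact h

end Aux

theorem stmt16 (V : Submodule ℝ (Fin n → ℝ)) (hV : IsRegularSpace V)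
    (r : Fin n) (c : Fin n → ℝ) (hc : ∀ j, j ≠ r → 0 ≤ c j)
    (f f' : Fin n → ℝ) (hfV : f ∈ V) (hf : Feasible c r f)
    (hf'V : f' ∈ V) (hf' : Feasible c r f') (hr : f r < f' r) :
    ∃ P, Augmenting V c r f P ∧ Conforms P (f' - f) := by
  classical
  obtain ⟨m, A, hATU, hVker⟩ := hV
  set d : Fin n → ℝ := f' - f with hd
  have hdV : d ∈ V := V.sub_mem hf'V hfV
  have hdr : d r > 0 := by
    have : d r = f' r - f r := rfl
    rw [this]; linarith
  obtain ⟨z, hzE, hzconf, hzr⟩ :=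
    exists_conform V (fsupp d).card d le_rfl hdV r (ne_of_gt hdr)
  have hzr_pos : z r > 0 := by
    have h1 := hzconf r hzr
    nlinarith
  have hpm := elementary_pm A hATU V hVker z hzE r hzr
  set P : Fin n → ℝ := (z r)⁻¹ • z with hPdef
  have hPapp : ∀ j, P j = (z r)⁻¹ * z j := fun j => rfl
  have hPr : P r = 1 := by
    rw [hPapp]; field_simp
  have hPE : IsElementary V P := smul_elementary hzE (inv_ne_zero (ne_of_gt hzr_pos))
  have hPentries : ∀ j, P j ∈ ({-1, 0, 1} : Set ℝ) := by
    intro j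
    rcases hpm j with h | h | h
    · right; right
      rw [hPapp, h]; field_simp; simp
    · left
      rw [hPapp, h]; field_simp
    · right; left
      rw [hPapp, h]; simp
  have hPconf : Conforms P d := by
    intro j hj
    have hzj : z j ≠ 0 := by
      intro h0
      apply hj
      rw [hPapp, h0, mul_zero]
    have h1 := hzconf j hzj
    have h2 : P j * d j = (z r)⁻¹ * (z j * d j) := by rw [hPapp]; ring
    rw [h2]
    exact mul_pos (inv_pos.mpr hzr_pos) h1
  have hrS : r ∈ fsupp P := mem_fsupp.mpr (by rw [hPr]; norm_num)
  set eps : ℝ := (fsupp P).inf' ⟨r, hrS⟩ (fun j => |d j|) with hepsdef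
  have hdj_ne : ∀ j ∈ fsupp P, d j ≠ 0 := by
    intro j hj
    have hPj := mem_fsupp.mp hj
    have := hPconf j hPj
    intro h0; rw [h0, mul_zero] at this; exact lt_irrefl 0 this
  have heps_pos : 0 < eps := by
    rw [hepsdef]; refine (Finset.lt_inf'_iff ..).mpr ?_
    intro j hj
    exact abs_pos.mpr (hdj_ne j hj)
  have heps_le : ∀ j ∈ fsupp P, eps ≤ |d j| := by
    intro j hj
    rw [hepsdef]
    exact Finset.inf'_le _ hj
  refine ⟨P, ⟨⟨⟨hPE, hPentries⟩, hPr⟩, eps, heps_pos, ?_⟩, hPconf⟩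
  intro j hj
  have hdjval : d j = f' j - f j := rfl
  have happ : (f + eps • P) j = f j + eps * P j := rfl
  rcases hPentries j with h | h | h
  · -- P j = -1
    have hjS : j ∈ fsupp P := mem_fsupp.mpr (by rw [h]; norm_num)
    have hconf := hPconf j (by rw [h]; norm_num)
    rw [h] at hconf
    have hdneg : d j < 0 := by nlinarith
    have hle : eps ≤ -(d j) := by
      have := heps_le j hjS
      rwa [abs_of_neg hdneg] at this
    constructor
    · rw [happ, h]
      have := (hf' j hj).1
      rw [hdjval] at hle
      linarith
    · rw [happ, h]
      have := (hf j hj).2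
      linarith [heps_pos]
  · -- P j = 0
    rw [happ, h, mul_zero, add_zero]
    exact hf j hj
  · -- P j = 1
    have hjS : j ∈ fsupp P := mem_fsupp.mpr (by rw [h]; norm_num)
    have hconf := hPconf j (by rw [h]; norm_num)
    rw [h] at hconf
    have hdpos : d j > 0 := by nlinarith
    have hle : eps ≤ d j := by
      have := heps_le j hjS
      rwa [abs_of_pos hdpos] at this
    constructor
    · rw [happ, h]
      have := (hf j hj).1
      linarith [heps_pos]
    · rw [happ, h]
      have := (hf' j hj).2
      rw [hdjval] at hle
      linarith
end
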